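/- arXiv:1608.08285 — 2 statements merged into one kernel-verified Lean document; each statement's English description precedes it below -/
import Mathlib

section
/- For any Q, W ∈ St_{m,ℓ}, the matrix (1/4)I_ℓ − φ_Q(W)ᵀ φ_Q(W) is positive semidefinite, where φ_Q(W) = (I_m − Q Qᵀ) W Wᵀ Q. Equivalently, ‖φ_Q(W) v‖ ≤ ‖v‖/2 for all v ∈ ℝ^ℓ. -/
open Matrix

/-- `(1/4)I − φ_Q(W)ᵀ φ_Q(W)` is positive semidefinite; equivalently
`‖φ_Q(W) v‖² ≤ ‖v‖²/4` for all `v`. -/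
theorem stmt6 {m ℓ : ℕ} (Q W : Matrix (Fin m) (Fin ℓ) ℝ)
    (hQ : Qᵀ * Q = 1) (hW : Wᵀ * W = 1) :
    ((1 / 4 : ℝ) • (1 : Matrix (Fin ℓ) (Fin ℓ) ℝ)
        - ((1 - Q * Qᵀ) * W * Wᵀ * Q)ᵀ * ((1 - Q * Qᵀ) * W * Wᵀ * Q)).PosSemidef ∧
    ∀ v : Fin ℓ → ℝ,
      (((1 - Q * Qᵀ) * W * Wᵀ * Q) *ᵥ v) ⬝ᵥ (((1 - Q * Qᵀ) * W * Wᵀ * Q) *ᵥ v)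
        ≤ (v ⬝ᵥ v) / 4 := by
  set φ : Matrix (Fin m) (Fin ℓ) ℝ := (1 - Q * Qᵀ) * W * Wᵀ * Q with hφ
  set A : Matrix (Fin ℓ) (Fin ℓ) ℝ := Qᵀ * W * (Wᵀ * Q) - (1/2 : ℝ) • 1 with hA
  have hQ' : ∀ X : Matrix (Fin ℓ) (Fin ℓ) ℝ, Qᵀ * (Q * X) = X := fun X => by
    rw [← Matrix.mul_assoc, hQ, Matrix.one_mul]
  have hW' : ∀ X : Matrix (Fin ℓ) (Fin ℓ) ℝ, Wᵀ * (W * X) = X := fun X => by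
    rw [← Matrix.mul_assoc, hW, Matrix.one_mul]
  have key : (1 / 4 : ℝ) • (1 : Matrix (Fin ℓ) (Fin ℓ) ℝ) - φᵀ * φ = Aᵀ * A := by
    rw [hφ, hA]
    simp only [transpose_sub, transpose_mul, transpose_one, transpose_transpose,
      transpose_smul, Matrix.mul_sub, Matrix.sub_mul, Matrix.smul_mul, Matrix.mul_smul,
      Matrix.one_mul, Matrix.mul_one, smul_smul, Matrix.mul_assoc, hQ', hW', hQ, hW]
    module
  have hpsd : ((1 / 4 : ℝ) • (1 : Matrix (Fin ℓ) (Fin ℓ) ℝ) - φᵀ * φ).PosSemidef := by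
    rw [key]
    have := Matrix.posSemidef_conjTranspose_mul_self A
    simpa using this
  refine ⟨hpsd, fun v => ?_⟩
  have h2 : v ⬝ᵥ ((φᵀ * φ) *ᵥ v) = (φ *ᵥ v) ⬝ᵥ (φ *ᵥ v) := by
    rw [← Matrix.mulVec_mulVec, Matrix.dotProduct_mulVec, Matrix.vecMul_transpose]
  have h3 := hpsd.dotProduct_mulVec_nonneg v
  simp only [star_trivial, Matrix.sub_mulVec, Matrix.smul_mulVec, Matrix.one_mulVec,
    dotProduct_sub, dotProduct_smul, smul_eq_mul] at h3
  rw [h2] at h3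
  linarith
end

section
/- Let Λ = diag(λ_1,...,λ_m) with λ_1 ≥ ... ≥ λ_m ≥ 0 and strict gap λ_ℓ > λ_{ℓ+1}. Then among all rank-ℓ orthogonal projection matrices P (symmetric, P² = P, tr P = ℓ), the Frobenius distance ‖Λ − P‖_F is uniquely minimized by P = diag(I_ℓ, 0). -/
open Matrix

section Aux

variable {m : ℕ}

lemma diag_sq_sum {P : Matrix (Fin m) (Fin m) ℝ} (hsym : Pᵀ = P) (hidem : P * P = P)
    (i : Fin m) : P i i = ∑ j, (P i j)^2 := by
  conv_lhs => rw [← hidem]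
  rw [Matrix.mul_apply]
  refine Finset.sum_congr rfl fun j _ => ?_
  have : P j i = P i j := by
    have := congrFun (congrFun hsym i) j
    rw [Matrix.transpose_apply] at this
    exact this
  rw [this, pow_two]

lemma diag_nonneg {P : Matrix (Fin m) (Fin m) ℝ} (hsym : Pᵀ = P) (hidem : P * P = P)
    (i : Fin m) : 0 ≤ P i i := by
  rw [diag_sq_sum hsym hidem i]
  exact Finset.sum_nonneg fun j _ => sq_nonneg _

lemma diag_le_one {P : Matrix (Fin m) (Fin m) ℝ} (hsym : Pᵀ = P) (hidem : P * P = P)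
    (i : Fin m) : P i i ≤ 1 := by
  have h := diag_sq_sum hsym hidem i
  have hle : (P i i)^2 ≤ ∑ j, (P i j)^2 :=
    Finset.single_le_sum (fun j _ => sq_nonneg (P i j)) (Finset.mem_univ i)
  nlinarith [h, hle]

lemma offdiag_sum {P : Matrix (Fin m) (Fin m) ℝ} (hsym : Pᵀ = P) (hidem : P * P = P)
    (i : Fin m) : ∑ j ∈ Finset.univ.erase i, (P i j)^2 = P i i - (P i i)^2 := by
  rw [Finset.sum_erase_eq_sub (Finset.mem_univ i), ← diag_sq_sum hsym hidem i]

lemma card_filter_lt {ℓ : ℕ} (h : ℓ ≤ m) :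
    (Finset.univ.filter fun i : Fin m => (i:ℕ) < ℓ).card = ℓ := by
  have : (Finset.univ.filter fun i : Fin m => (i:ℕ) < ℓ) =
      (Finset.range ℓ).attachFin (fun n hn => lt_of_lt_of_le (Finset.mem_range.mp hn) h) := by
    ext i; simp
  rw [this, Finset.card_attachFin, Finset.card_range]

lemma trace_expand (lam : Fin m → ℝ) {P : Matrix (Fin m) (Fin m) ℝ}
    (hsym : Pᵀ = P) (hidem : P * P = P) :
    trace ((diagonal lam - P)ᵀ * (diagonal lam - P))
      = trace (diagonal lam * diagonal lam) + trace P - 2 * ∑ i, lam i * P i i := by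
  have hT : (diagonal lam - P)ᵀ = diagonal lam - P := by
    rw [Matrix.transpose_sub, Matrix.diagonal_transpose, hsym]
  rw [hT, Matrix.sub_mul, Matrix.mul_sub, Matrix.mul_sub, trace_sub, trace_sub, trace_sub,
    hidem, Matrix.trace_mul_comm P (diagonal lam)]
  have : trace (diagonal lam * P) = ∑ i, lam i * P i i := by
    simp [Matrix.trace, Matrix.diag, Matrix.diagonal_mul]
  rw [this]; ring

end Aux

/-- Among rank-`ℓ` orthogonal projections, `‖Λ − P‖_F` is uniquely minimized by
`P = diag(I_ℓ, 0)` when the diagonal of `Λ` is decreasing with a strict gap at `ℓ`. -/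
theorem stmt14 {m ℓ : ℕ} (hℓ : ℓ ≤ m) (lam : Fin m → ℝ)
    (hanti : ∀ i j : Fin m, i ≤ j → lam j ≤ lam i)
    (hnn : ∀ i, 0 ≤ lam i)
    (hgap : ∀ i j : Fin m, (i : ℕ) < ℓ → ℓ ≤ (j : ℕ) → lam j < lam i)
    (P0 : Matrix (Fin m) (Fin m) ℝ)
    (hP0 : P0 = Matrix.diagonal fun i : Fin m => if (i : ℕ) < ℓ then (1 : ℝ) else 0) :
    (P0ᵀ = P0 ∧ P0 * P0 = P0 ∧ trace P0 = (ℓ : ℝ)) ∧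
    ∀ P : Matrix (Fin m) (Fin m) ℝ, Pᵀ = P → P * P = P → trace P = (ℓ : ℝ) →
      (trace ((diagonal lam - P0)ᵀ * (diagonal lam - P0))
          ≤ trace ((diagonal lam - P)ᵀ * (diagonal lam - P)) ∧
       (trace ((diagonal lam - P)ᵀ * (diagonal lam - P))
          = trace ((diagonal lam - P0)ᵀ * (diagonal lam - P0)) → P = P0)) := by
  classical
  set q : Fin m → ℝ := fun i => if (i : ℕ) < ℓ then (1 : ℝ) else 0 with hq
  have hsumq : ∑ i, q i = (ℓ : ℝ) := by
    rw [hq]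
    push_cast [Finset.sum_boole]
    rw [card_filter_lt hℓ]
  -- basic facts about P0
  have hP0sym : P0ᵀ = P0 := by rw [hP0]; exact Matrix.diagonal_transpose _
  have hP0idem : P0 * P0 = P0 := by
    have hqq : (fun i => q i * q i) = q := by
      funext i; by_cases h : (i:ℕ) < ℓ <;> simp [hq, h]
    rw [hP0, Matrix.diagonal_mul_diagonal, hqq]
  have hP0tr : trace P0 = (ℓ : ℝ) := by
    rw [hP0, Matrix.trace_diagonal]; exact hsumq
  refine ⟨⟨hP0sym, hP0idem, hP0tr⟩, ?_⟩
  intro P hsym hidem htr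
  -- the threshold value c
  set c : ℝ := if h : ℓ < m then lam ⟨ℓ, h⟩ else 0 with hc
  have hci : ∀ i : Fin m, (i : ℕ) < ℓ → c ≤ lam i := by
    intro i hi
    by_cases h : ℓ < m
    · simp only [hc, dif_pos h]
      exact le_of_lt (hgap i ⟨ℓ, h⟩ hi le_rfl)
    · simp only [hc, dif_neg h]; exact hnn i
  have hci' : ∀ i : Fin m, (i : ℕ) < ℓ → ℓ < m → c < lam i := by
    intro i hi h
    simp only [hc, dif_pos h]
    exact hgap i ⟨ℓ, h⟩ hi le_rfl
  have hcj : ∀ j : Fin m, ℓ ≤ (j : ℕ) → lam j ≤ c := by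
    intro j hj
    have h : ℓ < m := lt_of_le_of_lt hj j.isLt
    simp only [hc, dif_pos h]
    exact hanti ⟨ℓ, h⟩ j (by simpa [Fin.le_def] using hj)
  -- the key termwise nonnegativity
  have hterm : ∀ i : Fin m, 0 ≤ (lam i - c) * (q i - P i i) := by
    intro i
    by_cases h : (i : ℕ) < ℓ
    · have h1 : 0 ≤ lam i - c := sub_nonneg.mpr (hci i h)
      have h2 : 0 ≤ q i - P i i := by
        simp only [hq, if_pos h]
        exact sub_nonneg.mpr (diag_le_one hsym hidem i)
      exact mul_nonneg h1 h2
    · have h1 : lam i - c ≤ 0 := sub_nonpos.mpr (hcj i (le_of_not_gt h))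
      have h2 : q i - P i i ≤ 0 := by
        simp only [hq, if_neg h]
        simpa using diag_nonneg hsym hidem i
      nlinarith [h1, h2]
  have htrP : ∑ i, P i i = (ℓ : ℝ) := htr
  have hsum_id : ∑ i, (lam i - c) * (q i - P i i)
      = ∑ i, lam i * q i - ∑ i, lam i * P i i := by
    have : ∀ i : Fin m, (lam i - c) * (q i - P i i)
        = lam i * q i - lam i * P i i - c * q i + c * P i i := by intro i; ring
    rw [Finset.sum_congr rfl fun i _ => this i]
    rw [Finset.sum_add_distrib, Finset.sum_sub_distrib, Finset.sum_sub_distrib,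
      ← Finset.mul_sum, ← Finset.mul_sum, hsumq, htrP]
    ring
  have hP0diag : ∀ i, P0 i i = q i := by
    intro i; rw [hP0]; simp [Matrix.diagonal_apply_eq]
  have hsumP0 : ∑ i, lam i * P0 i i = ∑ i, lam i * q i :=
    Finset.sum_congr rfl fun i _ => by rw [hP0diag i]
  have hmain : ∑ i, lam i * P i i ≤ ∑ i, lam i * q i := by
    have := Finset.sum_nonneg fun i (_ : i ∈ Finset.univ) => hterm i
    rw [hsum_id] at this
    linarith
  constructor
  · rw [trace_expand lam hsym hidem, trace_expand lam hP0sym hP0idem, htr, hP0tr, hsumP0]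
    linarith
  · intro heq
    rw [trace_expand lam hsym hidem, trace_expand lam hP0sym hP0idem, htr, hP0tr, hsumP0] at heq
    have hsums : ∑ i, lam i * P i i = ∑ i, lam i * q i := by linarith
    have hzero : ∑ i, (lam i - c) * (q i - P i i) = 0 := by rw [hsum_id, hsums]; ring
    have hterm0 : ∀ i : Fin m, (lam i - c) * (q i - P i i) = 0 := by
      intro i
      have := (Finset.sum_eq_zero_iff_of_nonneg
        (fun i (_ : i ∈ Finset.univ) => hterm i)).mp hzero
      exact this i (Finset.mem_univ i)
    -- diagonal of P equals q
    have hdiag : ∀ i, P i i = q i := by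
      by_cases hlm : ℓ < m
      · -- strict gap: first the indices below ℓ
        have hbelow : ∀ i : Fin m, (i : ℕ) < ℓ → P i i = 1 := by
          intro i hi
          have h1 : lam i - c ≠ 0 := ne_of_gt (sub_pos.mpr (hci' i hi hlm))
          have h2 := hterm0 i
          have h3 : q i - P i i = 0 := by
            rcases mul_eq_zero.mp h2 with h | h
            · exact absurd h h1
            · exact h
          have : q i = 1 := by simp [hq, if_pos hi]
          linarith [sub_eq_zero.mp h3, this.symm ▸ (sub_eq_zero.mp h3)]
        -- then the rest via the trace
        set A := Finset.univ.filter fun i : Fin m => (i : ℕ) < ℓ with hA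
        have hsplit : ∑ i ∈ A, P i i + ∑ i ∈ Aᶜ, P i i = (ℓ : ℝ) := by
          rw [Finset.sum_add_sum_compl]; exact htrP
        have hAsum : ∑ i ∈ A, P i i = (ℓ : ℝ) := by
          have : ∀ i ∈ A, P i i = 1 := by
            intro i hi; exact hbelow i (by simpa [hA] using hi)
          rw [Finset.sum_congr rfl this, Finset.sum_const, nsmul_eq_mul, mul_one,
            card_filter_lt hℓ]
        have hcomp0 : ∑ i ∈ Aᶜ, P i i = 0 := by linarith
        have habove : ∀ i : Fin m, ¬ ((i : ℕ) < ℓ) → P i i = 0 := by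
          intro i hi
          have hmem : i ∈ Aᶜ := by simp only [hA, Finset.mem_compl, Finset.mem_filter]; tauto
          exact (Finset.sum_eq_zero_iff_of_nonneg
            (fun j _ => diag_nonneg hsym hidem j)).mp hcomp0 i hmem
        intro i
        by_cases h : (i : ℕ) < ℓ
        · rw [hbelow i h]; simp [hq, if_pos h]
        · rw [habove i h]; simp [hq, if_neg h]
      · -- ℓ = m : every index is below ℓ
        have hml : m = ℓ := le_antisymm (le_of_not_gt hlm) hℓ
        have hall : ∀ i : Fin m, (i : ℕ) < ℓ := fun i => hml ▸ i.isLt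
        have hsum1 : ∑ i : Fin m, (1 - P i i) = 0 := by
          rw [Finset.sum_sub_distrib, htrP, Finset.sum_const, Finset.card_univ,
            Fintype.card_fin, hml]
          simp
        have h1 : ∀ i : Fin m, 1 - P i i = 0 := by
          intro i
          exact (Finset.sum_eq_zero_iff_of_nonneg
            (fun j _ => sub_nonneg.mpr (diag_le_one hsym hidem j))).mp hsum1 i (Finset.mem_univ i)
        intro i
        have : P i i = 1 := by linarith [h1 i]
        rw [this]; simp [hq, if_pos (hall i)]
    -- off-diagonal entries vanish
    have hoff : ∀ i j : Fin m, j ≠ i → P i j = 0 := by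
      intro i j hji
      have h1 : ∑ j ∈ Finset.univ.erase i, (P i j)^2 = 0 := by
        rw [offdiag_sum hsym hidem i, hdiag i]
        rcases (by by_cases h : (i:ℕ) < ℓ <;> simp [hq, h] : q i = 0 ∨ q i = 1) with h | h <;>
          rw [h] <;> ring
      have := (Finset.sum_eq_zero_iff_of_nonneg
        (fun k _ => sq_nonneg (P i k))).mp h1 j (Finset.mem_erase.mpr ⟨hji, Finset.mem_univ j⟩)
      exact pow_eq_zero_iff (n := 2) (by norm_num) |>.mp this
    ext i j
    by_cases h : i = j
    · subst h
      rw [hdiag i, hP0diag i]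
    · rw [hoff i j (fun hji => h hji.symm), hP0, Matrix.diagonal_apply_ne _ h]
end
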